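/- Let n ≥ 1, N = {0,1,...,n}, and let β : 2^N → ℝ be a submodular set function with β(∅) = 0 and β(N) = 0. Let P(β) = {x ∈ ℝ^N : Σ_{i∈S} x_i ≤ β(S) for all S ⊆ N, and Σ_{i∈N} x_i = 0}. If x is an extreme point of P(β), then there exists a chain of subsets ∅ = S_0 ⊂ S_1 ⊂ ⋯ ⊂ S_{n+1} = N with |S_k| = k for each k, such that Σ_{i∈S_k} x_i = β(S_k) for all 0 ≤ k ≤ n+1. -/

import Mathlib

open Finset Pointwise

/-- The `i`-th standard basis vector of `ℝ^N`. -/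
noncomputable def std {m : ℕ} (i : Fin m) : Fin m → ℝ := fun k => if k = i then 1 else 0

/-- The 0/1 indicator vector of a subset `S ⊆ N`. -/
noncomputable def indic {m : ℕ} (S : Finset (Fin m)) : Fin m → ℝ := fun k => if k ∈ S then 1 else 0

/-- The standard inner product on `ℝ^N`. -/
noncomputable def ip {m : ℕ} (a b : Fin m → ℝ) : ℝ := ∑ k, a k * b k

/-- The cut set function of symmetric edge weights `b`: `β(S) = Σ_{i∈S, j∉S} b i j`. -/
noncomputable def cutFun {m : ℕ} (b : Fin m → Fin m → ℝ) (S : Finset (Fin m)) : ℝ :=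
  ∑ i ∈ S, ∑ j ∈ Sᶜ, b i j

/-- The base polytope of a set function `β`. -/
def basePoly {m : ℕ} (β : Finset (Fin m) → ℝ) : Set (Fin m → ℝ) :=
  {x | (∀ S : Finset (Fin m), ∑ i ∈ S, x i ≤ β S) ∧ ∑ i, x i = 0}

/-- Every extreme point of the base polytope of a submodular function
(vanishing on `∅` and `N`) admits a full chain of tight sets `∅ = S_0 ⊂ ⋯ ⊂ S_{n+1} = N`
with `|S_k| = k`. -/
theorem extremePoint_has_tight_chain (n : ℕ) (hn : 1 ≤ n) (β : Finset (Fin (n + 1)) → ℝ)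
    (hsub : ∀ S T : Finset (Fin (n + 1)), β (S ∩ T) + β (S ∪ T) ≤ β S + β T)
    (hempty : β ∅ = 0) (hfull : β Finset.univ = 0)
    (x : Fin (n + 1) → ℝ) (hx : x ∈ (basePoly β).extremePoints ℝ) :
    ∃ c : ℕ → Finset (Fin (n + 1)),
      c 0 = ∅ ∧ c (n + 1) = Finset.univ ∧
      (∀ k ≤ n + 1, (c k).card = k) ∧
      (∀ k < n + 1, c k ⊂ c (k + 1)) ∧
      (∀ k ≤ n + 1, ∑ i ∈ c k, x i = β (c k)) := by
  classical
  obtain ⟨hxP, hext⟩ := hx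
  obtain ⟨hle, hzero⟩ := hxP
  set tight : Finset (Fin (n + 1)) → Prop := fun S => ∑ i ∈ S, x i = β S with htight
  have htuniv : tight Finset.univ := by simpa [htight, hfull] using hzero
  have htempty : tight ∅ := by simp [htight, hempty]
  have hlat : ∀ S T, tight S → tight T → tight (S ∩ T) ∧ tight (S ∪ T) := by
    intro S T hS hT
    have h1 := hle (S ∩ T)
    have h2 := hle (S ∪ T)
    have hsum : ∑ i ∈ S ∪ T, x i + ∑ i ∈ S ∩ T, x i = ∑ i ∈ S, x i + ∑ i ∈ T, x i :=
      Finset.sum_union_inter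
    have h3 := hsub S T
    simp only [htight] at hS hT ⊢
    constructor <;> linarith
  have step : ∀ S, tight S → S ≠ Finset.univ →
      ∃ T, tight T ∧ S ⊂ T ∧ T.card = S.card + 1 := by
    intro S hS hSne
    set F : Finset (Finset (Fin (n + 1))) :=
      Finset.univ.filter (fun T => tight T ∧ S ⊂ T) with hF
    have hFne : F.Nonempty :=
      ⟨Finset.univ, by
        rw [hF, Finset.mem_filter]
        exact ⟨Finset.mem_univ _, htuniv, Finset.ssubset_univ_iff.mpr hSne⟩⟩
    obtain ⟨T, hTF, hTmin⟩ := F.exists_min_image Finset.card hFne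
    simp only [hF, Finset.mem_filter, Finset.mem_univ, true_and] at hTF
    obtain ⟨hTt, hST⟩ := hTF
    refine ⟨T, hTt, hST, ?_⟩
    by_contra hcard
    have h1 : S.card < T.card := Finset.card_lt_card hST
    have hds : 2 ≤ (T \ S).card := by
      rw [Finset.card_sdiff_of_subset hST.subset]; omega
    obtain ⟨i, hi, j, hj, hij⟩ := Finset.one_lt_card.mp hds
    have hiT : i ∈ T := (Finset.mem_sdiff.mp hi).1
    have hiS : i ∉ S := (Finset.mem_sdiff.mp hi).2
    have hjT : j ∈ T := (Finset.mem_sdiff.mp hj).1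
    have hjS : j ∉ S := (Finset.mem_sdiff.mp hj).2
    -- no tight set separates i and j
    have sep : ∀ A, tight A → (i ∈ A ↔ j ∈ A) := by
      intro A hA
      by_contra hne
      have hB : tight ((A ∪ S) ∩ T) := (hlat _ _ ((hlat A S hA hS).2) hTt).1
      have hSB : S ⊆ (A ∪ S) ∩ T :=
        Finset.subset_inter Finset.subset_union_right hST.subset
      have hBT : (A ∪ S) ∩ T ⊆ T := Finset.inter_subset_right
      rcases Classical.em (i ∈ A) with hiA | hiA
      · have hjA : j ∉ A := by tauto
        have hiB : i ∈ (A ∪ S) ∩ T :=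
          Finset.mem_inter.mpr ⟨Finset.mem_union_left _ hiA, hiT⟩
        have hjB : j ∉ (A ∪ S) ∩ T := by
          simp [Finset.mem_inter, Finset.mem_union, hjA, hjS]
        have hssub : S ⊂ (A ∪ S) ∩ T := ⟨hSB, fun h => hiS (h hiB)⟩
        have hlt : ((A ∪ S) ∩ T).card < T.card :=
          Finset.card_lt_card ⟨hBT, fun h => hjB (h hjT)⟩
        have := hTmin _ (by
          rw [hF, Finset.mem_filter]; exact ⟨Finset.mem_univ _, hB, hssub⟩)
        omega
      · have hjA : j ∈ A := by tauto
        have hjB : j ∈ (A ∪ S) ∩ T :=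
          Finset.mem_inter.mpr ⟨Finset.mem_union_left _ hjA, hjT⟩
        have hiB : i ∉ (A ∪ S) ∩ T := by
          simp [Finset.mem_inter, Finset.mem_union, hiA, hiS]
        have hssub : S ⊂ (A ∪ S) ∩ T := ⟨hSB, fun h => hjS (h hjB)⟩
        have hlt : ((A ∪ S) ∩ T).card < T.card :=
          Finset.card_lt_card ⟨hBT, fun h => hiB (h hiT)⟩
        have := hTmin _ (by
          rw [hF, Finset.mem_filter]; exact ⟨Finset.mem_univ _, hB, hssub⟩)
        omega
    -- positive slack for non-tight sets
    have hε : ∃ ε : ℝ, 0 < ε ∧ ∀ A, ¬ tight A → ε ≤ β A - ∑ k ∈ A, x k := by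
      set NT : Finset (Finset (Fin (n + 1))) := Finset.univ.filter (fun A => ¬ tight A) with hNT
      rcases NT.eq_empty_or_nonempty with h | h
      · refine ⟨1, one_pos, fun A hA => absurd ?_ (Finset.notMem_empty A)⟩
        rw [← h, hNT, Finset.mem_filter]; exact ⟨Finset.mem_univ _, hA⟩
      · obtain ⟨A0, hA0, hmin⟩ := NT.exists_min_image (fun A => β A - ∑ k ∈ A, x k) h
        simp only [hNT, Finset.mem_filter, Finset.mem_univ, true_and] at hA0
        refine ⟨β A0 - ∑ k ∈ A0, x k, ?_, ?_⟩
        · have := hle A0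
          have hne : ∑ k ∈ A0, x k ≠ β A0 := hA0
          have : ∑ k ∈ A0, x k < β A0 := lt_of_le_of_ne this hne
          linarith
        · intro A hA
          exact hmin A (by rw [hNT, Finset.mem_filter]; exact ⟨Finset.mem_univ _, hA⟩)
    obtain ⟨ε, hεpos, hεb⟩ := hε
    set d : Fin (n + 1) → ℝ :=
      fun k => (if k = i then (1 : ℝ) else 0) - (if k = j then (1 : ℝ) else 0) with hd
    have hdsum : ∀ A : Finset (Fin (n + 1)),
        ∑ k ∈ A, d k = (if i ∈ A then (1 : ℝ) else 0) - (if j ∈ A then (1 : ℝ) else 0) := by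
      intro A
      simp [hd, Finset.sum_sub_distrib, Finset.sum_ite_eq']
    have hmem : ∀ σ : ℝ, σ = 1 ∨ σ = -1 →
        (fun k => x k + σ * ε * d k) ∈ basePoly β := by
      intro σ hσ
      constructor
      · intro A
        rw [Finset.sum_add_distrib, ← Finset.mul_sum]
        by_cases hA : tight A
        · have hzero' : ∑ k ∈ A, d k = 0 := by
            rw [hdsum]
            by_cases h : i ∈ A
            · simp [h, (sep A hA).mp h]
            · have hjA : j ∉ A := fun hj' => h ((sep A hA).mpr hj')
              simp [h, hjA]
          rw [hzero']
          simpa using le_of_eq hA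
        · have hslack := hεb A hA
          have hb : -1 ≤ ∑ k ∈ A, d k ∧ ∑ k ∈ A, d k ≤ 1 := by
            rw [hdsum]; split_ifs <;> norm_num
          obtain ⟨hb1, hb2⟩ := hb
          rcases hσ with rfl | rfl <;> nlinarith
      · have : ∑ k, (x k + σ * ε * d k) = ∑ k, x k + σ * ε * ∑ k, d k := by
          rw [Finset.sum_add_distrib, Finset.mul_sum]
        rw [this, hdsum]
        simp [hzero]
    have h1 := hmem 1 (Or.inl rfl)
    have h2 := hmem (-1) (Or.inr rfl)
    have hopen : x ∈ openSegment ℝ (fun k => x k + 1 * ε * d k)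
        (fun k => x k + (-1) * ε * d k) := by
      refine ⟨1/2, 1/2, by norm_num, by norm_num, by norm_num, ?_⟩
      funext k
      simp only [Pi.add_apply, Pi.smul_apply, smul_eq_mul]
      ring
    have := (hext h1 h2 hopen)
    have hcontra := congrFun this i
    have hdi : d i = 1 := by simp [hd, hij]
    simp only [hdi] at hcontra
    have : ε = 0 := by linarith [hcontra, le_of_eq hcontra]
    · nlinarith
  -- build the chain
  have chain : ∀ k, k ≤ n + 1 → ∃ c : ℕ → Finset (Fin (n + 1)),
      c 0 = ∅ ∧ (∀ m, m ≤ k → (c m).card = m ∧ tight (c m)) ∧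
      (∀ m, m < k → c m ⊂ c (m + 1)) := by
    intro k
    induction k with
    | zero =>
      intro _
      refine ⟨fun _ => ∅, rfl, ?_, by omega⟩
      intro m hm
      interval_cases m
      exact ⟨rfl, htempty⟩
    | succ k ih =>
      intro hk
      obtain ⟨c, hc0, hprop, hmono⟩ := ih (by omega)
      have hck := hprop k (le_refl k)
      have hckne : c k ≠ Finset.univ := by
        intro h
        have := hck.1
        rw [h] at this
        simp at this
        omega
      obtain ⟨T, hTt, hST, hTcard⟩ := step (c k) hck.2 hckne
      refine ⟨fun m => if m ≤ k then c m else T, by simp [hc0], ?_, ?_⟩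
      · intro m hm
        by_cases h : m ≤ k
        · simpa [h] using hprop m h
        · have : m = k + 1 := by omega
          subst this
          simp only [if_neg h]
          exact ⟨by rw [hTcard, hck.1], hTt⟩
      · intro m hm
        by_cases h : m < k
        · have h1 : m ≤ k := by omega
          have h2 : m + 1 ≤ k := by omega
          simpa [h1, h2] using hmono m h
        · have : m = k := by omega
          subst this
          simp only [le_refl, if_pos, Nat.not_succ_le_self, if_neg]
          simpa using hST
  obtain ⟨c, hc0, hprop, hmono⟩ := chain (n + 1) le_rfl
  have huniv : c (n + 1) = Finset.univ := by
    apply Finset.eq_univ_of_card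
    rw [(hprop (n + 1) le_rfl).1]
    simp
  exact ⟨c, hc0, huniv, fun k hk => (hprop k hk).1, hmono, fun k hk => (hprop k hk).2⟩
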